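/- Let K be a totally real field that is closed under square roots, i.e., α ∈ K whenever α ∈ ℂ is a totally real algebraic number with α² ∈ K, and let L be a totally imaginary quadratic extension of K. Then, with X₀ = {u₁² + u₂² − u₃² − u₄² : u₁, u₂, u₃, u₄ units of R_{2,L}}, X₁ = {d ∈ O_L : 32·d ∈ X₀}, and X = {α ∈ O_L : there exist x₁, x₂ ∈ X₁ with 4·α = x₁ − x₂}, one has X = O_K as subsets of O_L. -/

import Mathlib

open Complex

noncomputable section

/-- The ring of integers of a subfield `L ⊆ ℂ`: the elements of `L` that are integral
over `ℤ`, viewed as a subring of `ℂ`. -/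
def ringOfInt (L : Subfield ℂ) : Subring ℂ where
  carrier := {x : ℂ | x ∈ L ∧ IsIntegral ℤ x}
  zero_mem' := ⟨L.zero_mem, isIntegral_zero⟩
  one_mem' := ⟨L.one_mem, isIntegral_one⟩
  add_mem' := fun hx hy => ⟨L.add_mem hx.1 hy.1, hx.2.add hy.2⟩
  mul_mem' := fun hx hy => ⟨L.mul_mem hx.1 hy.1, hx.2.mul hy.2⟩
  neg_mem' := fun hx => ⟨L.neg_mem hx.1, hx.2.neg⟩

lemma ringOfInt_mem_subfield {L : Subfield ℂ} {x : ℂ} (hx : x ∈ ringOfInt L) : x ∈ L := hx.1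

/-- The underlying set of the ring `R_{m,L} = {x ∈ O_L : ∃ a ∈ O_L, ∃ j, 0 ≤ j < m, x = j + m·a}`. -/
def Rset (m : ℕ) (L : Subfield ℂ) : Set ℂ :=
  {x : ℂ | x ∈ ringOfInt L ∧
    ∃ a ∈ ringOfInt L, ∃ j : ℤ, 0 ≤ j ∧ j < (m : ℤ) ∧ x = (j : ℂ) + (m : ℂ) * a}

lemma Rset_norm {m : ℕ} (hm : m ≠ 0) {L : Subfield ℂ} {x : ℂ} (hx : x ∈ ringOfInt L)
    {a : ℂ} (ha : a ∈ ringOfInt L) {j : ℤ} (h : x = (j : ℂ) + (m : ℂ) * a) :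
    x ∈ Rset m L := by
  have hm' : (0 : ℤ) < m := by exact_mod_cast Nat.pos_of_ne_zero hm
  refine ⟨hx, a + ((j / (m : ℤ) : ℤ) : ℂ), ?_, j % m,
    Int.emod_nonneg j (by exact_mod_cast hm), Int.emod_lt_of_pos j hm', ?_⟩
  · exact (ringOfInt L).add_mem ha (intCast_mem (ringOfInt L) _)
  · have key : ((m : ℤ) * (j / (m : ℤ)) + j % (m : ℤ) : ℤ) = j := Int.mul_ediv_add_emod j m
    have key' := congrArg (Int.cast : ℤ → ℂ) key
    push_cast at key'
    rw [h]
    linear_combination -key'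

/-- The ring `R_{m,L}`, as a subring of `ℂ`. -/
def Rring (m : ℕ) (hm : m ≠ 0) (L : Subfield ℂ) : Subring ℂ where
  carrier := Rset m L
  zero_mem' := Rset_norm hm (ringOfInt L).zero_mem (ringOfInt L).zero_mem (j := 0) (by simp)
  one_mem' := Rset_norm hm (ringOfInt L).one_mem (ringOfInt L).zero_mem (j := 1) (by simp)
  add_mem' := by
    rintro x y ⟨hx, a, ha, j, _, _, rfl⟩ ⟨hy, b, hb, k, _, _, rfl⟩
    exact Rset_norm hm ((ringOfInt L).add_mem hx hy) ((ringOfInt L).add_mem ha hb)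
      (j := j + k) (by push_cast; ring)
  mul_mem' := by
    rintro x y ⟨hx, a, ha, j, _, _, rfl⟩ ⟨hy, b, hb, k, _, _, rfl⟩
    refine Rset_norm hm ((ringOfInt L).mul_mem hx hy)
      (a := (j : ℂ) * b + (k : ℂ) * a + (m : ℂ) * (a * b)) ?_ (j := j * k) (by push_cast; ring)
    exact (ringOfInt L).add_mem
      ((ringOfInt L).add_mem ((ringOfInt L).mul_mem (intCast_mem _ j) hb)
        ((ringOfInt L).mul_mem (intCast_mem _ k) ha))
      ((ringOfInt L).mul_mem (natCast_mem _ m) ((ringOfInt L).mul_mem ha hb))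
  neg_mem' := by
    rintro x ⟨hx, a, ha, j, _, _, rfl⟩
    exact Rset_norm hm ((ringOfInt L).neg_mem hx) ((ringOfInt L).neg_mem ha)
      (j := -j) (by push_cast; ring)

lemma twoNZ : (2 : ℕ) ≠ 0 := by norm_num

/-- A subfield of `ℂ` is totally real if every embedding into `ℂ` has real image. -/
def IsTotallyRealSubfield (K : Subfield ℂ) : Prop :=
  ∀ (σ : K →+* ℂ) (x : K), (σ x).im = 0

/-- A subfield of `ℂ` is totally imaginary if no embedding into `ℂ` has real image. -/
def IsTotallyImaginarySubfield (L : Subfield ℂ) : Prop :=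
  ∀ σ : L →+* ℂ, ∃ x : L, (σ x).im ≠ 0

/-- `L` is a totally imaginary quadratic extension of the totally real field `K`:
`K ⊆ L ⊆ ℂ` are algebraic over `ℚ`, `L` is closed under complex conjugation,
`[L : K] = 2`, `K` is totally real and `L` is totally imaginary. -/
structure IsTIQExt (K L : Subfield ℂ) : Prop where
  le : K ≤ L
  alg : ∀ x : L, IsAlgebraic ℚ (x : ℂ)
  conj_closed : ∀ x ∈ L, (starRingEnd ℂ) x ∈ L
  tot_real : IsTotallyRealSubfield K
  tot_imaginary : IsTotallyImaginarySubfield L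
  deg : letI := (Subfield.inclusion le).toAlgebra; Module.finrank K L = 2

/-- An algebraic number `α ∈ ℂ` is totally real if all complex roots of its minimal
polynomial over `ℚ` are real. -/
def TotallyRealNum (α : ℂ) : Prop :=
  IsAlgebraic ℚ α ∧ ∀ z : ℂ, Polynomial.aeval z (minpoly ℚ α) = 0 → z.im = 0

/-- The set `X₀ = {u₁² + u₂² − u₃² − u₄² : uᵢ ∈ R_{2,L}ˣ}`. -/
def X0 (L : Subfield ℂ) : Set ℂ :=
  {x : ℂ | ∃ u₁ u₂ u₃ u₄ : (Rring 2 twoNZ L)ˣ,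
    x = ((u₁ : Rring 2 twoNZ L) : ℂ) ^ 2 + ((u₂ : Rring 2 twoNZ L) : ℂ) ^ 2
      - ((u₃ : Rring 2 twoNZ L) : ℂ) ^ 2 - ((u₄ : Rring 2 twoNZ L) : ℂ) ^ 2}

/-- The set `X₁ = {d ∈ O_L : 32·d ∈ X₀}`. -/
def X1 (L : Subfield ℂ) : Set ℂ :=
  {d : ℂ | d ∈ ringOfInt L ∧ 32 * d ∈ X0 L}

/-- The set `X = {α ∈ O_L : ∃ x₁, x₂ ∈ X₁, 4·α = x₁ − x₂}`. -/
def XX (L : Subfield ℂ) : Set ℂ :=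
  {α : ℂ | α ∈ ringOfInt L ∧ ∃ x₁ ∈ X1 L, ∃ x₂ ∈ X1 L, 4 * α = x₁ - x₂}

/-- The set of all totally real algebraic numbers (the field `ℚ^tr`). -/
def QtrSet : Set ℂ := {z : ℂ | TotallyRealNum z}

/-- The field `ℚ^tr(i)`, the subfield of `ℂ` generated by all totally real numbers and `i`. -/
def QtrI : Subfield ℂ := Subfield.closure (QtrSet ∪ {Complex.I})



set_option maxHeartbeats 1000000
set_option synthInstance.maxHeartbeats 400000

section Aux

variable {K L : Subfield ℂ}

lemma memK_im (h : IsTIQExt K L) {x : ℂ} (hx : x ∈ K) : x.im = 0 :=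
  h.tot_real K.subtype ⟨x, hx⟩

/-- Structure lemma: there is a purely imaginary generator γ of L over K. -/
lemma exists_gamma (h : IsTIQExt K L) :
    ∃ γ : ℂ, γ ∈ L ∧ γ.im ≠ 0 ∧ γ ^ 2 ∈ K ∧
      ∀ x ∈ L, ∃ a b : ℂ, a ∈ K ∧ b ∈ K ∧ x = a + b * γ := by
  letI := (Subfield.inclusion h.le).toAlgebra
  have hdeg := h.deg
  haveI : Module.Finite K L := Module.finite_of_finrank_eq_succ (n := 1) hdeg
  obtain ⟨θ, hθim⟩ := h.tot_imaginary L.subtype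
  have smul_coe : ∀ (a : K) (y : L), ((a • y : L) : ℂ) = (a : ℂ) * (y : ℂ) := by
    intro a y
    rw [Algebra.smul_def]
    rfl
  -- linear independence of 1, θ
  have hind : LinearIndependent K ![(1 : L), θ] := by
    rw [LinearIndependent.pair_iff]
    intro s t hst
    have hc : (s : ℂ) + (t : ℂ) * (θ : ℂ) = 0 := by
      have h0 : ((s • (1 : L) + t • θ : L) : ℂ) = 0 := by rw [hst]; rfl
      push_cast at h0
      rw [smul_coe, smul_coe] at h0
      simpa using h0
    have ht : (t : ℂ) = 0 := by
      by_contra ht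
      have hθval : (θ : ℂ) = -(s : ℂ) / (t : ℂ) := by
        rw [eq_div_iff ht]
        linear_combination hc
      have him : ((θ : ℂ)).im = 0 := by
        rw [hθval]
        have hs : (s : ℂ).im = 0 := memK_im h s.2
        have ht' : (t : ℂ).im = 0 := memK_im h t.2
        rw [Complex.div_im]
        simp [hs, ht', Complex.neg_im, Complex.neg_re]
      exact hθim him
    have hs : (s : ℂ) = 0 := by rw [ht] at hc; simpa using hc
    exact ⟨Subtype.ext (by exact_mod_cast hs), Subtype.ext (by exact_mod_cast ht)⟩
  have hcard : Fintype.card (Fin 2) = Module.finrank K ↥L := by simp [hdeg]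
  set B := basisOfLinearIndependentOfCardEqFinrank hind hcard with hBdef
  have hB : ⇑B = ![(1 : L), θ] := coe_basisOfLinearIndependentOfCardEqFinrank hind hcard
  -- decomposition wrt θ
  have Dec : ∀ x ∈ L, ∃ a b : ℂ, a ∈ K ∧ b ∈ K ∧ x = a + b * (θ : ℂ) := by
    intro x hx
    have hsum := B.sum_repr ⟨x, hx⟩
    rw [Fin.sum_univ_two] at hsum
    rw [hB] at hsum
    simp only [Matrix.cons_val_zero, Matrix.cons_val_one, Matrix.head_cons] at hsum
    refine ⟨(B.repr ⟨x, hx⟩ 0 : ℂ), (B.repr ⟨x, hx⟩ 1 : ℂ),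
      (B.repr ⟨x, hx⟩ 0).2, (B.repr ⟨x, hx⟩ 1).2, ?_⟩
    have h0 : ((B.repr ⟨x, hx⟩ 0 • (1 : L) + B.repr ⟨x, hx⟩ 1 • θ : L) : ℂ) = x := by
      rw [hsum]
    push_cast at h0
    rw [smul_coe, smul_coe] at h0
    simp only [OneMemClass.coe_one, mul_one] at h0
    exact h0.symm
  -- θ² = q + p θ
  obtain ⟨q, p, hqK, hpK, hθsq⟩ := Dec ((θ : ℂ) * (θ : ℂ)) (L.mul_mem θ.2 θ.2)
  have h2L : (2 : ℂ) ∈ L := by exact_mod_cast natCast_mem L 2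
  have h2K : (2 : ℂ) ∈ K := by exact_mod_cast natCast_mem K 2
  have h4K : (4 : ℂ) ∈ K := by exact_mod_cast natCast_mem K 4
  refine ⟨(θ : ℂ) - p / 2, ?_, ?_, ?_, ?_⟩
  · exact L.sub_mem θ.2 (L.div_mem (h.le hpK) h2L)
  · have hp2 : (p / 2 : ℂ).im = 0 := by
      have := memK_im h hpK
      simp [Complex.div_im, this]
    simpa [Complex.sub_im, hp2] using hθim
  · have hθγ : ((θ : ℂ) - p / 2) ^ 2 = q + p ^ 2 / 4 := by
      linear_combination hθsq
    rw [hθγ]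
    exact K.add_mem hqK (K.div_mem (K.pow_mem hpK 2) h4K)
  · intro x hx
    obtain ⟨a, b, haK, hbK, hab⟩ := Dec x hx
    refine ⟨a + b * (p / 2), b, K.add_mem haK (K.mul_mem hbK (K.div_mem hpK h2K)),
      hbK, ?_⟩
    rw [hab]; ring

end Aux

section Aux2

variable {K L : Subfield ℂ}

lemma real_mem_K (h : IsTIQExt K L) {x : ℂ} (hx : x ∈ L) (him : x.im = 0) : x ∈ K := by
  obtain ⟨γ, hγL, hγim, hγsqK, Dec⟩ := exists_gamma h
  -- γ.re = 0
  have hγre : γ.re = 0 := by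
    have h1 : (γ ^ 2).im = 0 := memK_im h hγsqK
    have h2 : (γ ^ 2).im = 2 * γ.re * γ.im := by
      rw [sq, Complex.mul_im]; ring
    rw [h2] at h1
    rcases mul_eq_zero.mp h1 with h3 | h3
    · rcases mul_eq_zero.mp h3 with h4 | h4
      · norm_num at h4
      · exact h4
    · exact absurd h3 hγim
  obtain ⟨a, b, haK, hbK, hab⟩ := Dec x hx
  have haim : a.im = 0 := memK_im h haK
  have hbim : b.im = 0 := memK_im h hbK
  have hxim : x.im = b.re * γ.im := by
    rw [hab, Complex.add_im, Complex.mul_im, haim, hbim, hγre]; ring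
  have hbre : b.re = 0 := by
    rw [him] at hxim
    rcases mul_eq_zero.mp hxim.symm with h3 | h3
    · exact h3
    · exact absurd h3 hγim
  have hb0 : b = 0 := Complex.ext hbre hbim
  rw [hab, hb0, zero_mul, add_zero]
  exact haK

/-- conjugation as a map L → L -/
def conjL (h : IsTIQExt K L) (x : L) : L := ⟨(starRingEnd ℂ) (x : ℂ), h.conj_closed _ x.2⟩

/-- CM property: every embedding of L commutes with complex conjugation. -/
lemma cm_property (h : IsTIQExt K L) (σ : L →+* ℂ) (x : L) :
    σ (conjL h x) = (starRingEnd ℂ) (σ x) := by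
  obtain ⟨γ, hγL, hγim, hγsqK, Dec⟩ := exists_gamma h
  have hγre : γ.re = 0 := by
    have h1 : (γ ^ 2).im = 0 := memK_im h hγsqK
    have h2 : (γ ^ 2).im = 2 * γ.re * γ.im := by
      rw [sq, Complex.mul_im]; ring
    rw [h2] at h1
    rcases mul_eq_zero.mp h1 with h3 | h3
    · rcases mul_eq_zero.mp h3 with h4 | h4
      · norm_num at h4
      · exact h4
    · exact absurd h3 hγim
  -- embeddings of K-elements are real
  have hσK : ∀ (a : ℂ) (ha : a ∈ K), (σ ⟨a, h.le ha⟩).im = 0 := by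
    intro a ha
    exact h.tot_real (σ.comp (Subfield.inclusion h.le)) ⟨a, ha⟩
  -- σ γ has square σ(γ²) which is the image of an element of K
  set g := σ ⟨γ, hγL⟩ with hgdef
  have hgsq : g ^ 2 = σ ⟨γ ^ 2, h.le hγsqK⟩ := by
    rw [← map_pow]
    rfl
  have hgsqim : (g ^ 2).im = 0 := by rw [hgsq]; exact hσK _ hγsqK
  -- σ γ is not real
  have hgim : g.im ≠ 0 := by
    intro hgim0
    obtain ⟨y, hy⟩ := h.tot_imaginary σ
    apply hy
    obtain ⟨a, b, haK, hbK, hab⟩ := Dec (y : ℂ) y.2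
    have hy2 : y = ⟨a, h.le haK⟩ + ⟨b, h.le hbK⟩ * ⟨γ, hγL⟩ := by
      apply Subtype.ext
      push_cast
      exact hab
    rw [hy2, map_add, map_mul]
    rw [Complex.add_im, Complex.mul_im, hσK a haK, hσK b hbK, ← hgdef, hgim0]
    ring
  have hgre : g.re = 0 := by
    have h2 : (g ^ 2).im = 2 * g.re * g.im := by rw [sq, Complex.mul_im]; ring
    rw [h2] at hgsqim
    rcases mul_eq_zero.mp hgsqim with h3 | h3
    · rcases mul_eq_zero.mp h3 with h4 | h4
      · norm_num at h4
      · exact h4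
    · exact absurd h3 hgim
  -- decompose x
  obtain ⟨a, b, haK, hbK, hab⟩ := Dec (x : ℂ) x.2
  have haim : a.im = 0 := memK_im h haK
  have hbim : b.im = 0 := memK_im h hbK
  have hx2 : x = ⟨a, h.le haK⟩ + ⟨b, h.le hbK⟩ * ⟨γ, hγL⟩ := by
    apply Subtype.ext
    push_cast
    exact hab
  have hconj : conjL h x = ⟨a, h.le haK⟩ - ⟨b, h.le hbK⟩ * ⟨γ, hγL⟩ := by
    apply Subtype.ext
    push_cast
    show (starRingEnd ℂ) (x : ℂ) = a - b * γ
    rw [hab, map_add, map_mul]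
    have hca : (starRingEnd ℂ) a = a := Complex.conj_eq_iff_im.mpr haim
    have hcb : (starRingEnd ℂ) b = b := Complex.conj_eq_iff_im.mpr hbim
    have hcγ : (starRingEnd ℂ) γ = -γ := by
      apply Complex.ext <;> simp [hγre]
    rw [hca, hcb, hcγ]
    ring
  have hA : (starRingEnd ℂ) (σ ⟨a, h.le haK⟩) = σ ⟨a, h.le haK⟩ :=
    Complex.conj_eq_iff_im.mpr (hσK a haK)
  have hB : (starRingEnd ℂ) (σ ⟨b, h.le hbK⟩) = σ ⟨b, h.le hbK⟩ :=
    Complex.conj_eq_iff_im.mpr (hσK b hbK)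
  have hgconj : (starRingEnd ℂ) g = -g := by
    apply Complex.ext <;> simp [hgre]
  rw [hconj, hx2, map_sub, map_mul, map_add, map_mul, map_add, map_mul, hA, hB, ← hgdef, hgconj]
  ring

end Aux2

section Lift

open IntermediateField

/-- A subfield of ℂ as an intermediate field of ℚ ⊆ ℂ. -/
def sfIF (M : Subfield ℂ) : IntermediateField ℚ ℂ :=
  Subfield.toIntermediateField M (fun q => by
    have := SubfieldClass.ratCast_mem M q
    simpa [eq_ratCast (algebraMap ℚ ℂ) q] using this)

lemma mem_sfIF {M : Subfield ℂ} {x : ℂ} : x ∈ sfIF M ↔ x ∈ M := Iff.rfl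

lemma subtype_aeval (M : Subfield ℂ) (x : M) (p : Polynomial ℚ) :
    (Polynomial.aeval (x : ℂ)) p = M.subtype (Polynomial.aeval x p) := by
  rw [Polynomial.aeval_def, Polynomial.aeval_def, Polynomial.hom_eval₂]
  have : (M.subtype).comp (algebraMap ℚ M) = algebraMap ℚ ℂ := Subsingleton.elim _ _
  rw [this]
  rfl

lemma hom_aeval (M : Subfield ℂ) (σ : M →+* ℂ) (x : M) (p : Polynomial ℚ) :
    σ (Polynomial.aeval x p) = Polynomial.aeval (σ x) p := by
  rw [Polynomial.aeval_def, Polynomial.aeval_def, Polynomial.hom_eval₂]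
  congr 1
  exact Subsingleton.elim _ _

/-- Every embedding of a subfield sends an element to a root of its minimal polynomial. -/
lemma map_root (M : Subfield ℂ) (σ : M →+* ℂ) {y : ℂ} (hy : y ∈ M) :
    Polynomial.aeval (σ ⟨y, hy⟩) (minpoly ℚ y) = 0 := by
  have h1 : Polynomial.aeval (⟨y, hy⟩ : M) (minpoly ℚ y) = 0 := by
    apply Subtype.coe_injective
    have := subtype_aeval M ⟨y, hy⟩ (minpoly ℚ y)
    have h2 : Polynomial.aeval y (minpoly ℚ y) = 0 := minpoly.aeval ℚ y
    simp only [h2] at this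
    exact this.symm
  rw [← hom_aeval, h1, map_zero]

/-- Lift an embedding of an intermediate field contained in an algebraic subfield `M`
to all of `M`. -/
lemma lift_embedding (M : Subfield ℂ) (halg : ∀ x : M, IsAlgebraic ℚ (x : ℂ))
    (F : IntermediateField ℚ ℂ) (hFM : ∀ z ∈ F, z ∈ M) (τ : F →ₐ[ℚ] ℂ) :
    ∃ σ : M →+* ℂ, ∀ (w : ℂ) (hw : w ∈ F), σ ⟨w, hFM w hw⟩ = τ ⟨w, hw⟩ := by
  letI : Algebra F ℂ := τ.toRingHom.toAlgebra
  let ι : F →+* M :=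
    { toFun := fun z => ⟨(z : ℂ), hFM _ z.2⟩
      map_one' := rfl
      map_mul' := fun _ _ => rfl
      map_zero' := rfl
      map_add' := fun _ _ => rfl }
  letI : Algebra F M := ι.toAlgebra
  haveI : IsScalarTower ℚ F M := IsScalarTower.of_algebraMap_eq' (Subsingleton.elim _ _)
  haveI : Algebra.IsAlgebraic F M := by
    constructor
    intro x
    have hQ : IsAlgebraic ℚ x := by
      obtain ⟨p, hp0, hp⟩ := halg x
      refine ⟨p, hp0, ?_⟩
      apply Subtype.coe_injective
      have := subtype_aeval M x p
      simp only [hp] at this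
      exact this.symm
    exact hQ.tower_top F
  haveI : Module.IsTorsionFree F M := inferInstance
  let algC : Algebra F ℂ := τ.toRingHom.toAlgebra
  let σA : M →ₐ[F] ℂ := IsAlgClosed.lift
  refine ⟨σA.toRingHom, fun w hw => ?_⟩
  have := σA.commutes ⟨w, hw⟩
  exact this

/-- Roots of minimal polynomials of elements of `M` are hit by embeddings. -/
lemma exists_embedding_of_root (M : Subfield ℂ) (halg : ∀ x : M, IsAlgebraic ℚ (x : ℂ))
    {y z : ℂ} (hy : y ∈ M) (hz : Polynomial.aeval z (minpoly ℚ y) = 0) :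
    ∃ σ : M →+* ℂ, σ ⟨y, hy⟩ = z := by
  have hyint : IsIntegral ℚ y := (halg ⟨y, hy⟩).isIntegral
  have hzmem : z ∈ (minpoly ℚ y).aroots ℂ :=
    Polynomial.mem_aroots.mpr ⟨minpoly.ne_zero hyint, hz⟩
  let τ : ℚ⟮y⟯ →ₐ[ℚ] ℂ := (IntermediateField.algHomAdjoinIntegralEquiv ℚ hyint).symm ⟨z, hzmem⟩
  have hτ : τ (IntermediateField.AdjoinSimple.gen ℚ y) = z :=
    IntermediateField.algHomAdjoinIntegralEquiv_symm_apply_gen ℚ hyint ⟨z, hzmem⟩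
  have hsub : ∀ w ∈ ℚ⟮y⟯, w ∈ M := by
    have hle : ℚ⟮y⟯ ≤ sfIF M := by
      rw [IntermediateField.adjoin_le_iff]
      rintro t ht
      rw [Set.mem_singleton_iff] at ht
      subst ht
      exact hy
    exact fun w hw => hle hw
  obtain ⟨σ, hσ⟩ := lift_embedding M halg ℚ⟮y⟯ hsub τ
  have hygen : y ∈ ℚ⟮y⟯ := IntermediateField.mem_adjoin_simple_self ℚ y
  refine ⟨σ, ?_⟩
  rw [hσ y hygen]
  rw [← hτ]
  rfl

end Lift

section UnitsReal

open IntermediateField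

variable {K L : Subfield ℂ}

lemma half_not_integral : ¬ IsIntegral ℤ ((2 : ℂ)⁻¹) := by
  intro hint
  have h1 : (2:ℂ)⁻¹ = algebraMap ℚ ℂ (2⁻¹ : ℚ) := by push_cast; norm_num
  rw [h1] at hint
  rw [isIntegral_algebraMap_iff (algebraMap ℚ ℂ).injective] at hint
  obtain ⟨y, hy⟩ := IsIntegrallyClosed.isIntegral_iff.mp hint
  have hy' : (y : ℚ) = 2⁻¹ := by exact_mod_cast hy
  have h2 : (2 * y : ℚ) = 1 := by rw [hy']; norm_num
  have h3 : (2 * y : ℤ) = 1 := by exact_mod_cast h2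
  omega

lemma conj_integral {z : ℂ} (hz : IsIntegral ℤ z) : IsIntegral ℤ ((starRingEnd ℂ) z) :=
  hz.map (starRingEnd ℂ).toIntAlgHom

lemma unit_mul_inv_coe (L : Subfield ℂ) (u : (Rring 2 twoNZ L)ˣ) :
    ((u : Rring 2 twoNZ L) : ℂ) * (((u⁻¹ : (Rring 2 twoNZ L)ˣ) : Rring 2 twoNZ L) : ℂ) = 1 := by
  have h0 : (((u : Rring 2 twoNZ L) * ((u⁻¹ : (Rring 2 twoNZ L)ˣ) : Rring 2 twoNZ L) :
      Rring 2 twoNZ L) : ℂ) = ((1 : Rring 2 twoNZ L) : ℂ) := by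
    rw [u.mul_inv]
  push_cast at h0
  exact h0

lemma unit_odd (L : Subfield ℂ) (u : (Rring 2 twoNZ L)ˣ) :
    ∃ a : ℂ, a ∈ ringOfInt L ∧ ((u : Rring 2 twoNZ L) : ℂ) = 1 + 2 * a := by
  have hmem : ((u : Rring 2 twoNZ L) : ℂ) ∈ Rset 2 L := (u : Rring 2 twoNZ L).2
  have hmem' : (((u⁻¹ : (Rring 2 twoNZ L)ˣ) : Rring 2 twoNZ L) : ℂ) ∈ Rset 2 L :=
    ((u⁻¹ : (Rring 2 twoNZ L)ˣ) : Rring 2 twoNZ L).2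
  have hmul := unit_mul_inv_coe L u
  obtain ⟨hO, a, ha, j, hj0, hj2, heq⟩ := hmem
  interval_cases j
  · -- j = 0 : impossible
    exfalso
    rw [heq] at hmul
    push_cast at hmul
    have h2 : (2:ℂ) * (a * (((u⁻¹ : (Rring 2 twoNZ L)ˣ) : Rring 2 twoNZ L) : ℂ)) = 1 := by
      linear_combination hmul
    have hhalf := eq_inv_of_mul_eq_one_right h2
    apply half_not_integral
    rw [← hhalf]
    exact ha.2.mul hmem'.1.2
  · refine ⟨a, ha, ?_⟩
    rw [heq]
    push_cast
    ring

lemma unit_sq_real (h : IsTIQExt K L) (u : (Rring 2 twoNZ L)ˣ) :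
    (((u : Rring 2 twoNZ L) : ℂ) ^ 2).im = 0 := by
  classical
  obtain ⟨a, haO, haeq⟩ := unit_odd L u
  obtain ⟨b, hbO, hbeq⟩ := unit_odd L u⁻¹
  set uc : ℂ := ((u : Rring 2 twoNZ L) : ℂ) with huc
  set ui : ℂ := (((u⁻¹ : (Rring 2 twoNZ L)ˣ) : Rring 2 twoNZ L) : ℂ) with hui
  have hmul : uc * ui = 1 := unit_mul_inv_coe L u
  have hucO : uc ∈ ringOfInt L := (u : Rring 2 twoNZ L).2.1
  have huiO : ui ∈ ringOfInt L := ((u⁻¹ : (Rring 2 twoNZ L)ˣ) : Rring 2 twoNZ L).2.1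
  have hucL : uc ∈ L := hucO.1
  have huiL : ui ∈ L := huiO.1
  -- the auxiliary element η
  set η : ℂ := uc * (starRingEnd ℂ) ui with hη
  have hηL : η ∈ L := L.mul_mem hucL (h.conj_closed _ huiL)
  have hηint : IsIntegral ℤ η := hucO.2.mul (conj_integral huiO.2)
  have hηconj : η * (starRingEnd ℂ) η = 1 := by
    have hc : (starRingEnd ℂ) η = (starRingEnd ℂ) uc * ui := by
      rw [hη, map_mul, Complex.conj_conj]
    rw [hc, hη]
    calc uc * (starRingEnd ℂ) ui * ((starRingEnd ℂ) uc * ui)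
        = (uc * ui) * ((starRingEnd ℂ) uc * (starRingEnd ℂ) ui) := by ring
      _ = (uc * ui) * (starRingEnd ℂ) (uc * ui) := by rw [map_mul]
      _ = 1 := by rw [hmul, map_one, mul_one]
  -- η = ±1 via the norm argument
  have key : η = 1 ∨ η = -1 := by
    set δ : ℂ := (η - 1) / 2 with hδ
    have hδint : IsIntegral ℤ δ := by
      have hδeq : δ = a + (starRingEnd ℂ) b +
          (a * (starRingEnd ℂ) b + a * (starRingEnd ℂ) b) := by
        have hcb : (starRingEnd ℂ) ui = 1 + 2 * (starRingEnd ℂ) b := by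
          rw [hbeq, map_add, map_mul, map_one, map_ofNat]
        rw [hδ, hη, haeq, hcb]
        ring
      rw [hδeq]
      exact (haO.2.add (conj_integral hbO.2)).add
        ((haO.2.mul (conj_integral hbO.2)).add (haO.2.mul (conj_integral hbO.2)))
    have hηQ : IsIntegral ℚ η := hηint.tower_top
    haveI : FiniteDimensional ℚ ℚ⟮η⟯ := IntermediateField.adjoin.finiteDimensional hηQ
    set F : IntermediateField ℚ ℂ := ℚ⟮η⟯ with hF
    set ηF : F := IntermediateField.AdjoinSimple.gen ℚ η with hηF
    have hηFc : (ηF : ℂ) = η := rfl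
    set δF : F := (ηF - 1) / 2 with hδF
    have hδFc : (algebraMap F ℂ) δF = δ := by
      show ((δF : F) : ℂ) = δ
      rw [hδF, hδ]
      push_cast
      rfl
    have hηmem : η ∈ F := IntermediateField.mem_adjoin_simple_self ℚ η
    have hLalg : ∀ x : L, IsAlgebraic ℚ (x : ℂ) := h.alg
    have hFL : ∀ z ∈ F, z ∈ L := by
      have hle : F ≤ sfIF L := by
        rw [hF, IntermediateField.adjoin_le_iff]
        rintro t ht
        rw [Set.mem_singleton_iff] at ht
        subst ht
        exact hηL
      exact fun z hz => hle hz
    -- all embeddings of η have absolute value 1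
    have habsη : ∀ τ : F →ₐ[ℚ] ℂ, ‖τ ηF‖ = 1 := by
      intro τ
      obtain ⟨σ, hσ⟩ := lift_embedding L hLalg F hFL τ
      have h1 := hσ η hηmem
      have h2 : (⟨η, hηmem⟩ : F) = ηF := Subtype.ext rfl
      rw [h2] at h1
      have hτη : τ ηF = σ ⟨η, hηL⟩ := h1.symm
      have hcm := cm_property h σ ⟨η, hηL⟩
      have hprod : σ ⟨η, hηL⟩ * (starRingEnd ℂ) (σ ⟨η, hηL⟩) = 1 := by
        rw [← hcm, ← map_mul]
        have h3 : (⟨η, hηL⟩ * conjL h ⟨η, hηL⟩ : L) = 1 := Subtype.ext hηconj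
        rw [h3, map_one]
      have hns : Complex.normSq (σ ⟨η, hηL⟩) = 1 := by
        rw [Complex.mul_conj] at hprod
        exact_mod_cast hprod
      rw [hτη]
      have h4 : ‖σ ⟨η, hηL⟩‖ ^ 2 = 1 := by rw [Complex.sq_norm, hns]
      nlinarith [norm_nonneg (σ ⟨η, hηL⟩)]
    have habsδ : ∀ τ : F →ₐ[ℚ] ℂ, ‖τ δF‖ ≤ 1 := by
      intro τ
      have hτδ : τ δF = (τ ηF - 1) / 2 := by
        rw [hδF, map_div₀, map_sub, map_one, map_ofNat]
      rw [hτδ, norm_div]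
      have h2 : ‖(2:ℂ)‖ = 2 := by norm_num
      rw [h2]
      have h3 := norm_sub_le (τ ηF) 1
      rw [habsη τ] at h3
      simp only [norm_one] at h3
      linarith
    -- the norm of δF is an integer
    have hδFint : IsIntegral ℤ δF := by
      rw [← isIntegral_algebraMap_iff (algebraMap F ℂ).injective, hδFc]
      exact hδint
    have hNint : IsIntegral ℤ (Algebra.norm ℚ δF) := Algebra.isIntegral_norm ℚ hδFint
    obtain ⟨n, hn⟩ := IsIntegrallyClosed.isIntegral_iff.mp hNint
    have hprodN := Algebra.norm_eq_prod_embeddings ℚ ℂ δF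
    by_cases hn0 : Algebra.norm ℚ δF = 0
    · -- δF = 0, so η = 1
      left
      have hδF0 : δF = 0 := by rwa [Algebra.norm_eq_zero_iff] at hn0
      have hδ0 : δ = 0 := by rw [← hδFc, hδF0, map_zero]
      rw [hδ, div_eq_zero_iff] at hδ0
      rcases hδ0 with h1 | h1
      · exact sub_eq_zero.mp h1
      · norm_num at h1
    · right
      -- |δ| ≥ 1 via the integer norm, hence |δ| = 1 and η = -1
      have hvalδ : (F.val : F →ₐ[ℚ] ℂ) δF = δ := hδFc
      have habsprod : ‖algebraMap ℚ ℂ (Algebra.norm ℚ δF)‖ =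
          ∏ τ : F →ₐ[ℚ] ℂ, ‖τ δF‖ := by
        rw [hprodN, norm_prod]
      have hne : n ≠ 0 := by
        rintro rfl
        apply hn0
        rw [← hn]
        norm_num
      have hge1 : (1:ℝ) ≤ ‖algebraMap ℚ ℂ (Algebra.norm ℚ δF)‖ := by
        rw [← hn]
        have h5 : algebraMap ℚ ℂ ((algebraMap ℤ ℚ) n) = (n : ℂ) := by push_cast; norm_num
        rw [h5, Complex.norm_intCast]
        have h6 : (1:ℤ) ≤ |n| := Int.one_le_abs hne
        calc (1:ℝ) ≤ |(n:ℤ)| := by exact_mod_cast h6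
          _ = |(n:ℝ)| := by push_cast; rfl
      have hsplit := Finset.mul_prod_erase Finset.univ
        (fun τ : F →ₐ[ℚ] ℂ => ‖τ δF‖) (Finset.mem_univ (F.val : F →ₐ[ℚ] ℂ))
      have hrest : ∏ τ ∈ Finset.univ.erase (F.val : F →ₐ[ℚ] ℂ), ‖τ δF‖ ≤ 1 :=
        Finset.prod_le_one (fun τ _ => norm_nonneg _) (fun τ _ => habsδ τ)
      have hrest0 : (0:ℝ) ≤ ∏ τ ∈ Finset.univ.erase (F.val : F →ₐ[ℚ] ℂ),
          ‖τ δF‖ := Finset.prod_nonneg (fun τ _ => norm_nonneg _)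
      have h1le : 1 ≤ ‖δ‖ := by
        have h7 := hge1
        rw [habsprod, ← hsplit] at h7
        have h7' : 1 ≤ ‖δ‖ * ∏ τ ∈ Finset.univ.erase (F.val : F →ₐ[ℚ] ℂ), ‖τ δF‖ := by
          rw [← hvalδ]; exact h7
        nlinarith [norm_nonneg δ]
      have habsδ1 : ‖δ‖ = 1 := le_antisymm (by rw [← hvalδ]; exact habsδ F.val) h1le
      -- now |η| = 1 and |η - 1| = 2 force η = -1
      have hηabs : Complex.normSq η = 1 := by
        rw [Complex.mul_conj] at hηconj
        exact_mod_cast hηconj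
      have hsub4 : Complex.normSq (η - 1) = 4 := by
        have h8 : ‖η - 1‖ = 2 := by
          have h9 : ‖δ‖ = ‖η - 1‖ / 2 := by
            rw [hδ, norm_div]
            norm_num
          rw [habsδ1] at h9
          linarith [h9]
        have := Complex.sq_norm (η - 1)
        rw [h8] at this
        linarith [this]
      rw [Complex.normSq_apply] at hηabs
      rw [Complex.normSq_apply, Complex.sub_re, Complex.sub_im, Complex.one_re,
        Complex.one_im] at hsub4
      have hre : η.re = -1 := by nlinarith
      have him : η.im = 0 := by nlinarith
      apply Complex.ext
      · rw [hre]; norm_num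
      · rw [him]; norm_num
  -- conclude : conj uc = ± uc, so uc² is real
  have hconj_mul : (starRingEnd ℂ) uc * (starRingEnd ℂ) ui = 1 := by
    rw [← map_mul, hmul, map_one]
  have hcui0 : (starRingEnd ℂ) ui ≠ 0 := by
    intro h0
    rw [h0, mul_zero] at hconj_mul
    exact zero_ne_one hconj_mul
  have hconj_uc : (starRingEnd ℂ) uc = uc ∨ (starRingEnd ℂ) uc = -uc := by
    rcases key with hk | hk
    · left
      have h2 : (starRingEnd ℂ) uc * (starRingEnd ℂ) ui = uc * (starRingEnd ℂ) ui := by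
        rw [hconj_mul, ← hη, hk]
      exact mul_right_cancel₀ hcui0 h2
    · right
      have h3 : (starRingEnd ℂ) uc * (starRingEnd ℂ) ui = (-uc) * (starRingEnd ℂ) ui := by
        rw [hconj_mul]
        have h4 : uc * (starRingEnd ℂ) ui = -1 := by rw [← hη]; exact hk
        linear_combination h4
      exact mul_right_cancel₀ hcui0 h3
  rw [← Complex.conj_eq_iff_im, map_pow]
  rcases hconj_uc with hc | hc <;> rw [hc] <;> ring

end UnitsReal

section Construction

open Polynomial

variable {K L : Subfield ℂ}

lemma im_zero_of_sq {z : ℂ} (him : (z ^ 2).im = 0) (hre : 0 ≤ (z ^ 2).re) : z.im = 0 := by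
  have h1 : (z ^ 2).im = 2 * z.re * z.im := by rw [sq, Complex.mul_im]; ring
  have h2 : (z ^ 2).re = z.re ^ 2 - z.im ^ 2 := by rw [sq, Complex.mul_re]; ring
  rw [h1] at him
  rw [h2] at hre
  rcases mul_eq_zero.mp him with h3 | h3
  · rcases mul_eq_zero.mp h3 with h4 | h4
    · norm_num at h4
    · nlinarith [sq_nonneg z.im]
  · exact h3

lemma sqrt_mem (h : IsTIQExt K L)
    (hsqrt : ∀ α : ℂ, TotallyRealNum α → α ^ 2 ∈ K → α ∈ K)
    {c : ℂ} (hcK : c ∈ K) (hcI : IsIntegral ℤ c)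
    (hpos : ∀ σ : K →+* ℂ, 0 ≤ (σ ⟨c, hcK⟩).re * ((σ ⟨c, hcK⟩).re + 1)) :
    ∃ e : ℂ, e ∈ K ∧ IsIntegral ℤ e ∧ e ^ 2 = c * (c + 1) := by
  have hKalg : ∀ x : K, IsAlgebraic ℚ (x : ℂ) := fun x => h.alg ⟨(x : ℂ), h.le x.2⟩
  have hcim : c.im = 0 := memK_im h hcK
  set w : ℂ := c * (c + 1) with hw
  have hwK : w ∈ K := K.mul_mem hcK (K.add_mem hcK K.one_mem)
  have hwI : IsIntegral ℤ w := hcI.mul (hcI.add isIntegral_one)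
  have hwim : w.im = 0 := by
    rw [hw, Complex.mul_im, Complex.add_im, Complex.add_re, hcim]
    norm_num
  have hwre : 0 ≤ w.re := by
    have h0 := hpos K.subtype
    have h1 : (K.subtype ⟨c, hcK⟩) = c := rfl
    rw [h1] at h0
    rw [hw, Complex.mul_re, Complex.add_re, Complex.add_im, hcim]
    simpa using h0
  refine ⟨(Real.sqrt w.re : ℂ), ?_, ?_, ?_⟩
  rotate_left
  · apply IsIntegral.of_pow (n := 2) (by norm_num)
    have he2 : ((Real.sqrt w.re : ℝ) : ℂ) ^ 2 = w := by
      rw [← Complex.ofReal_pow, Real.sq_sqrt hwre]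
      exact Complex.ext rfl hwim.symm
    rw [he2]
    exact hwI
  · rw [← Complex.ofReal_pow, Real.sq_sqrt hwre]
    exact Complex.ext rfl hwim.symm
  -- the sqrt is totally real, so lies in K
  have he2 : ((Real.sqrt w.re : ℝ) : ℂ) ^ 2 = w := by
    rw [← Complex.ofReal_pow, Real.sq_sqrt hwre]
    exact Complex.ext rfl hwim.symm
  set e : ℂ := (Real.sqrt w.re : ℂ) with he
  have heI : IsIntegral ℤ e := by
    apply IsIntegral.of_pow (n := 2) (by norm_num)
    rw [he2]
    exact hwI
  have healg : IsAlgebraic ℚ e := (heI.tower_top (A := ℚ)).isAlgebraic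
  have hroots : ∀ z : ℂ, Polynomial.aeval z (minpoly ℚ e) = 0 → z.im = 0 := by
    intro z hz
    have hcomp : Polynomial.aeval e ((minpoly ℚ w).comp (X ^ 2)) = 0 := by
      rw [aeval_comp, map_pow, aeval_X, he2]
      exact minpoly.aeval ℚ w
    have hdvd : minpoly ℚ e ∣ (minpoly ℚ w).comp (X ^ 2) := minpoly.dvd ℚ e hcomp
    obtain ⟨g, hg⟩ := hdvd
    have hz2 : Polynomial.aeval (z ^ 2) (minpoly ℚ w) = 0 := by
      have h5 : Polynomial.aeval z ((minpoly ℚ w).comp (X ^ 2)) = 0 := by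
        rw [hg, map_mul, hz, zero_mul]
      rwa [aeval_comp, map_pow, aeval_X] at h5
    obtain ⟨σ, hσ⟩ := exists_embedding_of_root K hKalg hwK hz2
    have hwc : (⟨w, hwK⟩ : K) = ⟨c, hcK⟩ * (⟨c, hcK⟩ + 1) := Subtype.ext rfl
    have himσ : (σ ⟨c, hcK⟩).im = 0 := h.tot_real σ ⟨c, hcK⟩
    have hposσ := hpos σ
    have hz2v : z ^ 2 = σ ⟨c, hcK⟩ * (σ ⟨c, hcK⟩ + 1) := by
      rw [← hσ, hwc, map_mul, map_add, map_one]
    apply im_zero_of_sq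
    · rw [hz2v, Complex.mul_im, Complex.add_im, Complex.add_re, himσ]
      norm_num
    · rw [hz2v, Complex.mul_re, Complex.add_re, Complex.add_im, himσ]
      simpa using hposσ
  exact hsqrt e ⟨healg, hroots⟩ (by rw [he2]; exact hwK)

lemma mk_unit (h : IsTIQExt K L) {c e : ℂ} (hcK : c ∈ K) (hcI : IsIntegral ℤ c)
    (heK : e ∈ K) (heI : IsIntegral ℤ e) (he2 : e ^ 2 = c * (c + 1)) :
    ∃ U : (Rring 2 twoNZ L)ˣ,
      ((U : Rring 2 twoNZ L) : ℂ) = 1 + 2 * (c + e) ∧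
      (((U⁻¹ : (Rring 2 twoNZ L)ˣ) : Rring 2 twoNZ L) : ℂ) = 1 + 2 * (c - e) := by
  have hceO : c + e ∈ ringOfInt L := ⟨L.add_mem (h.le hcK) (h.le heK), hcI.add heI⟩
  have hceO' : c - e ∈ ringOfInt L := ⟨L.sub_mem (h.le hcK) (h.le heK), hcI.sub heI⟩
  have huO : (1 + 2 * (c + e)) ∈ ringOfInt L :=
    (ringOfInt L).add_mem (ringOfInt L).one_mem
      ((ringOfInt L).mul_mem (by exact_mod_cast natCast_mem (ringOfInt L) 2) hceO)
  have hvO : (1 + 2 * (c - e)) ∈ ringOfInt L :=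
    (ringOfInt L).add_mem (ringOfInt L).one_mem
      ((ringOfInt L).mul_mem (by exact_mod_cast natCast_mem (ringOfInt L) 2) hceO')
  have huR : (1 + 2 * (c + e)) ∈ Rring 2 twoNZ L :=
    Rset_norm twoNZ huO hceO (j := 1) (by push_cast; ring)
  have hvR : (1 + 2 * (c - e)) ∈ Rring 2 twoNZ L :=
    Rset_norm twoNZ hvO hceO' (j := 1) (by push_cast; ring)
  have hmul : (1 + 2 * (c + e)) * (1 + 2 * (c - e)) = 1 := by
    linear_combination (-4 : ℂ) * he2
  refine ⟨⟨⟨1 + 2 * (c + e), huR⟩, ⟨1 + 2 * (c - e), hvR⟩,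
    Subtype.ext (by push_cast; exact hmul),
    Subtype.ext (by push_cast; linear_combination hmul)⟩, rfl, rfl⟩

end Construction

/-- Let `K` be a totally real field closed under square roots (any totally real algebraic `α`
with `α² ∈ K` lies in `K`) and let `L` be a totally imaginary quadratic extension of `K`. Then
with `X₀, X₁, X` as above, `X = O_K` as subsets of `O_L`. -/
theorem X_eq_ringOfInt (K L : Subfield ℂ)
    (hsqrt : ∀ α : ℂ, TotallyRealNum α → α ^ 2 ∈ K → α ∈ K)
    (h : IsTIQExt K L) :
    XX L = (ringOfInt K : Set ℂ) := by
  apply Set.eq_of_subset_of_subset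
  · -- X ⊆ O_K
    rintro α ⟨hαO, x₁, ⟨hx₁O, u₁, u₂, u₃, u₄, hx₁⟩, x₂, ⟨hx₂O, v₁, v₂, v₃, v₄, hx₂⟩, heq⟩
    have him32 : ∀ (y : ℂ) (w₁ w₂ w₃ w₄ : (Rring 2 twoNZ L)ˣ),
        32 * y = ((w₁ : Rring 2 twoNZ L) : ℂ) ^ 2 + ((w₂ : Rring 2 twoNZ L) : ℂ) ^ 2
          - ((w₃ : Rring 2 twoNZ L) : ℂ) ^ 2 - ((w₄ : Rring 2 twoNZ L) : ℂ) ^ 2 → y.im = 0 := by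
      intro y w₁ w₂ w₃ w₄ hy
      have h32 : (32 * y).im = 0 := by
        rw [hy]
        simp [Complex.sub_im, Complex.add_im,
          unit_sq_real h w₁, unit_sq_real h w₂, unit_sq_real h w₃, unit_sq_real h w₄]
      have : (32 * y).im = 32 * y.im := by
        rw [Complex.mul_im]
        norm_num
      rw [this] at h32
      linarith
    have hx₁im : x₁.im = 0 := him32 x₁ u₁ u₂ u₃ u₄ hx₁
    have hx₂im : x₂.im = 0 := him32 x₂ v₁ v₂ v₃ v₄ hx₂
    have hαim : α.im = 0 := by
      have h4 : (4 * α).im = x₁.im - x₂.im := by rw [heq, Complex.sub_im]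
      rw [hx₁im, hx₂im] at h4
      have h5 : (4 * α).im = 4 * α.im := by rw [Complex.mul_im]; norm_num
      rw [h5] at h4
      linarith
    exact ⟨real_mem_K h hαO.1 hαim, hαO.2⟩
  · -- O_K ⊆ X
    rintro β ⟨hβK, hβI⟩
    have hβO : β ∈ ringOfInt L := ⟨h.le hβK, hβI⟩
    -- a bound for all conjugates of β
    have hβalg : IsAlgebraic ℚ β := h.alg ⟨β, h.le hβK⟩
    have hpne : minpoly ℚ β ≠ 0 := minpoly.ne_zero hβalg.isIntegral
    set B : ℝ := (((minpoly ℚ β).aroots ℂ).map (fun z : ℂ => ‖z‖)).sum with hBdef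
    have hB : ∀ z : ℂ, Polynomial.aeval z (minpoly ℚ β) = 0 → ‖z‖ ≤ B := by
      intro z hz
      apply Multiset.single_le_sum
      · intro x hx
        obtain ⟨r, _, rfl⟩ := Multiset.mem_map.mp hx
        exact norm_nonneg r
      · exact Multiset.mem_map.mpr ⟨z, Polynomial.mem_aroots.mpr ⟨hpne, hz⟩, rfl⟩
    obtain ⟨N, hN⟩ := exists_nat_gt (B + 2)
    have hσβ : ∀ σ : K →+* ℂ, ‖σ ⟨β, hβK⟩‖ ≤ B :=
      fun σ => hB _ (map_root K σ hβK)
    have hσβim : ∀ σ : K →+* ℂ, (σ ⟨β, hβK⟩).im = 0 := fun σ => h.tot_real σ _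
    have hB0 : 0 ≤ B := le_trans (norm_nonneg _) (hσβ K.subtype)
    -- the four auxiliary elements
    have hNI : IsIntegral ℤ ((N : ℂ)) := by
      have : ((N : ℂ)) = algebraMap ℤ ℂ (N : ℤ) := by push_cast; norm_num
      rw [this]
      exact isIntegral_algebraMap
    have hNK : ((N : ℂ)) ∈ K := natCast_mem K N
    have h1K : (1 : ℂ) ∈ K := K.one_mem
    have h2K : (2 : ℂ) ∈ K := by exact_mod_cast natCast_mem K 2
    -- c₁ = β + N, c₂ = β - (N+1), c₃ = β + N - 2, c₄ = β - N + 1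
    have hc₁K : β + N ∈ K := K.add_mem hβK hNK
    have hc₂K : β - (N + 1) ∈ K := K.sub_mem hβK (K.add_mem hNK h1K)
    have hc₃K : β + N - 2 ∈ K := K.sub_mem (K.add_mem hβK hNK) h2K
    have hc₄K : β - N + 1 ∈ K := K.add_mem (K.sub_mem hβK hNK) h1K
    have h1I : IsIntegral ℤ (1 : ℂ) := isIntegral_one
    have h2I : IsIntegral ℤ (2 : ℂ) := by
      have : ((2 : ℂ)) = algebraMap ℤ ℂ (2 : ℤ) := by push_cast; norm_num
      rw [this]; exact isIntegral_algebraMap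
    have hc₁I : IsIntegral ℤ (β + N) := hβI.add hNI
    have hc₂I : IsIntegral ℤ (β - (N + 1)) := hβI.sub (hNI.add h1I)
    have hc₃I : IsIntegral ℤ (β + N - 2) := (hβI.add hNI).sub h2I
    have hc₄I : IsIntegral ℤ (β - N + 1) := (hβI.sub hNI).add h1I
    -- positivity conditions
    have hre : ∀ σ : K →+* ℂ, |(σ ⟨β, hβK⟩).re| ≤ B := by
      intro σ
      exact le_trans (Complex.abs_re_le_norm _) (hσβ σ)
    have hval : ∀ (σ : K →+* ℂ) (k : ℤ), σ ⟨β + k, K.add_mem hβK (intCast_mem K k)⟩ =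
        σ ⟨β, hβK⟩ + k := by
      intro σ k
      have : (⟨β + k, K.add_mem hβK (intCast_mem K k)⟩ : K) = ⟨β, hβK⟩ + (k : K) := by
        apply Subtype.ext
        push_cast
        ring
      rw [this, map_add, map_intCast]
    -- helper to build the units for c = β + k
    have mkU : ∀ k : ℤ, (∀ σ : K →+* ℂ, 0 ≤ ((σ ⟨β, hβK⟩).re + k) * (((σ ⟨β, hβK⟩).re + k) + 1)) →
        ∃ U : (Rring 2 twoNZ L)ˣ, ∃ e : ℂ, e ^ 2 = (β + k) * ((β + k) + 1) ∧
          ((U : Rring 2 twoNZ L) : ℂ) = 1 + 2 * ((β + k) + e) ∧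
          (((U⁻¹ : (Rring 2 twoNZ L)ˣ) : Rring 2 twoNZ L) : ℂ) = 1 + 2 * ((β + k) - e) := by
      intro k hk
      have hcK : β + k ∈ K := K.add_mem hβK (intCast_mem K k)
      have hcI : IsIntegral ℤ (β + (k : ℂ)) := by
        apply hβI.add
        have : ((k : ℂ)) = algebraMap ℤ ℂ k := by norm_num
        rw [this]; exact isIntegral_algebraMap
      have hpos : ∀ σ : K →+* ℂ, 0 ≤ (σ ⟨β + k, hcK⟩).re * ((σ ⟨β + k, hcK⟩).re + 1) := by
        intro σ
        have hv := hval σ k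
        have : (σ ⟨β + k, hcK⟩) = σ ⟨β, hβK⟩ + k := hv
        rw [this]
        have him : ((σ ⟨β, hβK⟩ + (k : ℂ))).re = (σ ⟨β, hβK⟩).re + k := by
          rw [Complex.add_re, Complex.intCast_re]
        rw [him]
        exact hk σ
      obtain ⟨e, heK, heI, he2⟩ := sqrt_mem h hsqrt hcK hcI hpos
      obtain ⟨U, hU, hU'⟩ := mk_unit h hcK hcI heK heI he2
      exact ⟨U, e, he2, hU, hU'⟩
    -- instantiate for the four values of k
    have hb : ∀ σ : K →+* ℂ, |(σ ⟨β, hβK⟩).re| ≤ B := hre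
    obtain ⟨U₁, e₁, he₁, hU₁, hU₁'⟩ := mkU N (by
      intro σ
      have := hb σ
      have hN' : B + 2 < (N : ℝ) := hN
      push_cast
      nlinarith [abs_le.mp (hb σ)])
    obtain ⟨U₂, e₂, he₂, hU₂, hU₂'⟩ := mkU (-(N + 1)) (by
      intro σ
      have hN' : B + 2 < (N : ℝ) := hN
      push_cast
      nlinarith [abs_le.mp (hb σ)])
    obtain ⟨U₃, e₃, he₃, hU₃, hU₃'⟩ := mkU (N - 2) (by
      intro σ
      have hN' : B + 2 < (N : ℝ) := hN
      push_cast
      nlinarith [abs_le.mp (hb σ)])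
    obtain ⟨U₄, e₄, he₄, hU₄, hU₄'⟩ := mkU (-(N - 1)) (by
      intro σ
      have hN' : B + 2 < (N : ℝ) := hN
      push_cast
      nlinarith [abs_le.mp (hb σ)])
    -- the elements x₁ and x₂
    have hcoefO : ∀ m : ℤ, ((m : ℂ)) ∈ ringOfInt L := fun m => intCast_mem (ringOfInt L) m
    have hx₁O : β * (2 * N + 1) ∈ ringOfInt L := by
      apply (ringOfInt L).mul_mem hβO
      have : ((2 * (N : ℤ) + 1 : ℤ) : ℂ) = 2 * N + 1 := by push_cast; ring
      rw [← this]; exact hcoefO _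
    have hx₂O : β * (2 * N - 3) ∈ ringOfInt L := by
      apply (ringOfInt L).mul_mem hβO
      have : ((2 * (N : ℤ) - 3 : ℤ) : ℂ) = 2 * N - 3 := by push_cast; ring
      rw [← this]; exact hcoefO _
    refine ⟨hβO, β * (2 * N + 1), ⟨hx₁O, U₁, U₁⁻¹, U₂, U₂⁻¹, ?_⟩,
      β * (2 * N - 3), ⟨hx₂O, U₃, U₃⁻¹, U₄, U₄⁻¹, ?_⟩, by push_cast; ring⟩
    · rw [hU₁, hU₁', hU₂, hU₂']
      push_cast at he₁ he₂ ⊢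
      linear_combination (-8 : ℂ) * he₁ + (8 : ℂ) * he₂
    · rw [hU₃, hU₃', hU₄, hU₄']
      push_cast at he₃ he₄ ⊢
      linear_combination (-8 : ℂ) * he₃ + (8 : ℂ) * he₄
end
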